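/- arXiv:2206.02006 — 9 statements merged into one kernel-verified Lean document; each statement's English description precedes it below -/
import Mathlib

section
/- Let d be a positive integer and let x ∈ ℝ^d satisfy x_i ≤ 0 for every i. If g : ℝ → ℝ is convex, then the set function F : 𝒫({1,…,d}) → ℝ defined by F(A) = g(∑_{i∈A} x_i) (i.e., F(A) = g(⟨w, x⟩) where w ∈ {0,1}^d is the indicator vector of A) is supermodular. -/
/-- A set function on subsets of `Fin d` is submodular when it has diminishing returns. -/
def IsSubmodular {d : ℕ} (F : Finset (Fin d) → ℝ) : Prop :=
  ∀ B A : Finset (Fin d), B ⊆ A → ∀ i ∉ A,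
    F (insert i B) - F B ≥ F (insert i A) - F A

/-- A set function is supermodular when the reverse inequality always holds. -/
def IsSupermodular {d : ℕ} (F : Finset (Fin d) → ℝ) : Prop :=
  ∀ B A : Finset (Fin d), B ⊆ A → ∀ i ∉ A,
    F (insert i B) - F B ≤ F (insert i A) - F A

lemma convex_four_point (g : ℝ → ℝ) (hg : ConvexOn ℝ Set.univ g)
    {u v t : ℝ} (huv : u ≤ v) (ht : t ≤ 0) :
    g (v + t) - g v ≤ g (u + t) - g u := by
  rcases eq_or_lt_of_le ht with rfl | ht'
  · simp
  · have hden : 0 < v - u - t := by linarith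
    set θ : ℝ := (v - u) / (v - u - t) with hθ
    have hθ0 : 0 ≤ θ := div_nonneg (by linarith) hden.le
    have h1θ : 1 - θ = (-t) / (v - u - t) := by
      field_simp [hθ]
      rw [hθ, sub_mul, div_mul_cancel₀ _ hden.ne']; ring
    have h1θ0 : 0 ≤ 1 - θ := by rw [h1θ]; exact div_nonneg (by linarith) hden.le
    have hsum : θ + (1 - θ) = 1 := by ring
    have e1 : θ • (u + t) + (1 - θ) • v = u := by
      simp only [smul_eq_mul, h1θ, hθ]; field_simp; ring
    have e2 : (1 - θ) • (u + t) + θ • v = v + t := by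
      simp only [smul_eq_mul, h1θ, hθ]; field_simp; ring
    have c1 := hg.2 (Set.mem_univ (u + t)) (Set.mem_univ v) hθ0 h1θ0 hsum
    have c2 := hg.2 (Set.mem_univ (u + t)) (Set.mem_univ v) h1θ0 hθ0 (by ring)
    rw [e1] at c1
    rw [e2] at c2
    simp only [smul_eq_mul] at c1 c2
    linarith

theorem convex_comp_nonpos_modular_sum_supermodular
    (d : ℕ) (hd : 0 < d) (x : Fin d → ℝ) (hx : ∀ i, x i ≤ 0)
    (g : ℝ → ℝ) (hg : ConvexOn ℝ Set.univ g) :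
    IsSupermodular (fun A : Finset (Fin d) => g (∑ i ∈ A, x i)) := by
  intro B A hBA i hiA
  have hiB : i ∉ B := fun h => hiA (hBA h)
  simp only [Finset.sum_insert hiA, Finset.sum_insert hiB]
  have hle : ∑ j ∈ A, x j ≤ ∑ j ∈ B, x j := by
    have hs : ∑ j ∈ A \ B, x j + ∑ j ∈ B, x j = ∑ j ∈ A, x j := Finset.sum_sdiff hBA
    have hnp : ∑ j ∈ A \ B, x j ≤ 0 := Finset.sum_nonpos (fun j _ => hx j)
    linarith
  have := convex_four_point g hg hle (hx i)
  simpa [add_comm] using this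
end

section
/- Let d be a positive integer, let α < β be real numbers, and let x ∈ ℝ^d satisfy either x_i ≥ 0 for every i or x_i ≤ 0 for every i. If g : ℝ → ℝ is convex, then the set function F : 𝒫({1,…,d}) → ℝ defined by F(B) = g(α ∑_{j∉B} x_j + β ∑_{k∈B} x_k) (i.e., F(B) = g(⟨w, x⟩) where w ∈ {α,β}^d has w_i = β exactly for i ∈ B) is supermodular. -/
lemma key_convex_shift (g : ℝ → ℝ) (hg : ConvexOn ℝ Set.univ g) {t u c : ℝ}
    (htu : t ≤ u) (hc : 0 ≤ c) : g (t + c) - g t ≤ g (u + c) - g u := by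
  rcases eq_or_lt_of_le hc with rfl | hc
  · simp
  rcases eq_or_lt_of_le htu with rfl | htu
  · exact le_refl _
  have h1 := hg.secant_mono (Set.mem_univ t) (Set.mem_univ (t + c)) (Set.mem_univ (u + c))
    (by linarith) (by linarith) (by linarith)
  have h2 := hg.secant_mono (Set.mem_univ (u + c)) (Set.mem_univ t) (Set.mem_univ u)
    (by linarith) (by linarith) htu.le
  rw [show t - (u + c) = -((u + c) - t) by ring, show u - (u + c) = -c by ring,
    show g t - g (u + c) = -(g (u + c) - g t) by ring,
    show g u - g (u + c) = -(g (u + c) - g u) by ring, neg_div_neg_eq, neg_div_neg_eq] at h2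
  rw [add_sub_cancel_left] at h1
  exact (div_le_div_iff_of_pos_right hc).mp (h1.trans h2)

lemma key_convex_shift' (g : ℝ → ℝ) (hg : ConvexOn ℝ Set.univ g) {t u c : ℝ}
    (htu : u ≤ t) (hc : c ≤ 0) : g (t + c) - g t ≤ g (u + c) - g u := by
  have h := key_convex_shift g hg (t := u + c) (u := t + c) (c := -c)
    (by linarith) (by linarith)
  rw [show u + c + -c = u by ring, show t + c + -c = t by ring] at h
  linarith

theorem convex_alphabeta_weights_supermodular
    (d : ℕ) (hd : 0 < d) (α β : ℝ) (hαβ : α < β)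
    (x : Fin d → ℝ) (hx : (∀ i, 0 ≤ x i) ∨ (∀ i, x i ≤ 0))
    (g : ℝ → ℝ) (hg : ConvexOn ℝ Set.univ g) :
    IsSupermodular (fun B : Finset (Fin d) =>
      g (α * ∑ j ∈ Bᶜ, x j + β * ∑ k ∈ B, x k)) := by
  intro B A hBA i hiA
  have hiB : i ∉ B := fun h => hiA (hBA h)
  have hcompl : ∀ C : Finset (Fin d), ∑ j ∈ Cᶜ, x j = ∑ j, x j - ∑ j ∈ C, x j := by
    intro C
    rw [eq_sub_iff_add_eq, Finset.sum_compl_add_sum]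
  simp only [hcompl, Finset.sum_insert hiB, Finset.sum_insert hiA]
  set T := ∑ j, x j
  set sB := ∑ k ∈ B, x k
  set sA := ∑ k ∈ A, x k
  have e1 : α * (T - (x i + sB)) + β * (x i + sB)
      = (α * T + (β - α) * sB) + (β - α) * x i := by ring
  have e2 : α * (T - sB) + β * sB = α * T + (β - α) * sB := by ring
  have e3 : α * (T - (x i + sA)) + β * (x i + sA)
      = (α * T + (β - α) * sA) + (β - α) * x i := by ring
  have e4 : α * (T - sA) + β * sA = α * T + (β - α) * sA := by ring
  rw [e1, e2, e3, e4]
  rcases hx with hpos | hneg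
  · have hs : sB ≤ sA := Finset.sum_le_sum_of_subset_of_nonneg hBA fun j _ _ => hpos j
    exact key_convex_shift g hg (by nlinarith) (by nlinarith [hpos i])
  · have hs : sA ≤ sB := by
      have h := Finset.sum_le_sum_of_subset_of_nonneg (f := fun j => -x j) hBA
        (fun j _ _ => neg_nonneg.mpr (hneg j))
      simp only [Finset.sum_neg_distrib] at h
      linarith
    exact key_convex_shift' g hg (by nlinarith) (by nlinarith [hneg i])
end

section
/- Let ℓ : ℝ → ℝ be a convex function satisfying ℓ(t) ≥ [t ≤ 0] for all t ∈ ℝ (where [·] is the Iverson bracket, equal to 1 if the condition holds and 0 otherwise). Then for every d, every x ∈ ℝ^d, every w ∈ ℝ^d, and every y ∈ {−1, +1}, it holds that (ℓ(y⟨w, pos(x)⟩) + ℓ(y⟨w, neg(x)⟩))/2 ≥ [y⟨w, x⟩ ≤ 0]. -/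
theorem posneg_split_upper_bounds_zero_one_loss
    (ℓ : ℝ → ℝ) (hℓ : ConvexOn ℝ Set.univ ℓ)
    (hub : ∀ t : ℝ, ℓ t ≥ if t ≤ 0 then (1 : ℝ) else 0)
    (d : ℕ) (x w : Fin d → ℝ) (y : ℝ) (hy : y = -1 ∨ y = 1) :
    (ℓ (y * ∑ i, w i * max 0 (x i)) + ℓ (y * ∑ i, w i * (-(max 0 (-(x i)))))) / 2
      ≥ if y * ∑ i, w i * x i ≤ 0 then (1 : ℝ) else 0 := by
  set a := y * ∑ i, w i * max 0 (x i) with ha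
  set b := y * ∑ i, w i * (-(max 0 (-(x i)))) with hb
  have hab : a + b = y * ∑ i, w i * x i := by
    rw [ha, hb, ← mul_add, ← Finset.sum_add_distrib]
    congr 1
    apply Finset.sum_congr rfl
    intro i _
    rw [← mul_add]
    congr 1
    rcases le_total (x i) 0 with h | h
    · rw [max_eq_left h, max_eq_right (by linarith)]; ring
    · rw [max_eq_right h, max_eq_left (by linarith)]; ring
  have hconv : ℓ ((a + b) / 2) ≤ (ℓ a + ℓ b) / 2 := by
    have := hℓ.2 (Set.mem_univ a) (Set.mem_univ b)
      (le_of_lt one_half_pos) (le_of_lt one_half_pos) (by norm_num)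
    simpa [smul_eq_mul, div_eq_mul_inv, add_mul, mul_add, mul_comm] using this
  have hnn : ∀ t : ℝ, 0 ≤ ℓ t := fun t => le_trans (by positivity) (hub t)
  by_cases h : y * ∑ i, w i * x i ≤ 0
  · rw [if_pos h]
    have h2 : (a + b) / 2 ≤ 0 := by rw [hab]; linarith
    have := hub ((a + b) / 2)
    rw [if_pos h2] at this
    linarith
  · rw [if_neg h]
    have := hnn a; have := hnn b; linarith
end

section
/- Let ℓ : ℝ → ℝ be a convex function, let d be a positive integer, x ∈ ℝ^d, and y ∈ {−1, +1}. Then the set function F : 𝒫({1,…,d}) → ℝ defined by F(A) = (ℓ(y ∑_{i∈A} pos(x)_i) + ℓ(y ∑_{i∈A} neg(x)_i))/2 (i.e., F(A) = (ℓ(y⟨w, pos(x)⟩) + ℓ(y⟨w, neg(x)⟩))/2 where w ∈ {0,1}^d is the indicator vector of A) is supermodular. -/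
/-- For a convex function, the increment over a step of fixed nonnegative length `h`
is nondecreasing in the base point. -/
lemma convex_incr_mono (ℓ : ℝ → ℝ) (hℓ : ConvexOn ℝ Set.univ ℓ)
    {a b h : ℝ} (hab : a ≤ b) (hh : 0 ≤ h) :
    ℓ (a + h) - ℓ a ≤ ℓ (b + h) - ℓ b := by
  rcases eq_or_lt_of_le hh with rfl | hh
  · simp
  rcases eq_or_lt_of_le hab with rfl | hab
  · simp
  have h1 := hℓ.secant_mono (a := a) (x := a + h) (y := b + h)
    trivial trivial trivial (by linarith) (by linarith) (by linarith)
  have h2 := hℓ.secant_mono (a := b + h) (x := a) (y := b)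
    trivial trivial trivial (by linarith) (by linarith) hab.le
  simp only [add_sub_cancel_left] at h1
  have e1 : (ℓ a - ℓ (b + h)) / (a - (b + h)) = (ℓ (b + h) - ℓ a) / (b + h - a) := by
    rw [← neg_div_neg_eq]; ring_nf
  have e2 : (ℓ b - ℓ (b + h)) / (b - (b + h)) = (ℓ (b + h) - ℓ b) / h := by
    rw [← neg_div_neg_eq]; ring_nf
  rw [e1, e2] at h2
  have := h1.trans h2
  calc ℓ (a + h) - ℓ a = (ℓ (a + h) - ℓ a) / h * h := by field_simp
    _ ≤ (ℓ (b + h) - ℓ b) / h * h := by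
        exact mul_le_mul_of_nonneg_right this hh.le
    _ = ℓ (b + h) - ℓ b := by field_simp

/-- The reversed version: for `h ≤ 0` the increment is nonincreasing in the base point. -/
lemma convex_incr_anti (ℓ : ℝ → ℝ) (hℓ : ConvexOn ℝ Set.univ ℓ)
    {a b h : ℝ} (hab : a ≤ b) (hh : h ≤ 0) :
    ℓ (b + h) - ℓ b ≤ ℓ (a + h) - ℓ a := by
  have := convex_incr_mono ℓ hℓ (a := a + h) (b := b + h) (h := -h)
    (by linarith) (by linarith)
  simp only [add_neg_cancel_right] at this
  linarith

theorem posneg_split_loss_supermodular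
    (ℓ : ℝ → ℝ) (hℓ : ConvexOn ℝ Set.univ ℓ)
    (d : ℕ) (hd : 0 < d) (x : Fin d → ℝ) (y : ℝ) (hy : y = -1 ∨ y = 1) :
    IsSupermodular (fun A : Finset (Fin d) =>
      (ℓ (y * ∑ i ∈ A, max 0 (x i)) + ℓ (y * ∑ i ∈ A, -(max 0 (-(x i))))) / 2) := by
  intro B A hBA i hiA
  have hiB : i ∉ B := fun h => hiA (hBA h)
  simp only [Finset.sum_insert hiA, Finset.sum_insert hiB]
  set p : ℝ := max 0 (x i) with hp
  set n : ℝ := -(max 0 (-(x i))) with hn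
  set sB : ℝ := ∑ j ∈ B, max 0 (x j)
  set sA : ℝ := ∑ j ∈ A, max 0 (x j)
  set tB : ℝ := ∑ j ∈ B, -(max 0 (-(x j)))
  set tA : ℝ := ∑ j ∈ A, -(max 0 (-(x j)))
  have hp0 : 0 ≤ p := le_max_left _ _
  have hn0 : n ≤ 0 := neg_nonpos.mpr (le_max_left _ _)
  have hs : sB ≤ sA :=
    Finset.sum_le_sum_of_subset_of_nonneg hBA (fun j _ _ => le_max_left _ _)
  have ht : tA ≤ tB := by
    have : ∑ j ∈ B, max 0 (-(x j)) ≤ ∑ j ∈ A, max 0 (-(x j)) :=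
      Finset.sum_le_sum_of_subset_of_nonneg hBA (fun j _ _ => le_max_left _ _)
    simp only [tA, tB, Finset.sum_neg_distrib]
    linarith
  have key1 : ℓ (y * (p + sB)) - ℓ (y * sB) ≤ ℓ (y * (p + sA)) - ℓ (y * sA) := by
    rcases hy with rfl | rfl
    · have := convex_incr_anti ℓ hℓ (a := -sA) (b := -sB) (h := -p)
        (by linarith) (by linarith)
      have e : ∀ s : ℝ, (-1 : ℝ) * (p + s) = -s + -p := by intro s; ring
      rw [e, e]; simpa using this
    · have := convex_incr_mono ℓ hℓ (a := sB) (b := sA) (h := p) hs hp0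
      have e : ∀ s : ℝ, (1 : ℝ) * (p + s) = s + p := by intro s; ring
      rw [e, e]; simpa using this
  have key2 : ℓ (y * (n + tB)) - ℓ (y * tB) ≤ ℓ (y * (n + tA)) - ℓ (y * tA) := by
    rcases hy with rfl | rfl
    · have := convex_incr_mono ℓ hℓ (a := -tB) (b := -tA) (h := -n)
        (by linarith) (by linarith)
      have e : ∀ s : ℝ, (-1 : ℝ) * (n + s) = -s + -n := by intro s; ring
      rw [e, e]; simpa using this
    · have := convex_incr_anti ℓ hℓ (a := tA) (b := tB) (h := n) ht hn0
      have e : ∀ s : ℝ, (1 : ℝ) * (n + s) = s + n := by intro s; ring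
      rw [e, e]; simpa using this
  linarith
end

section
/- Let n, d be positive integers, let α < β be real numbers, let x₁, …, xₙ ∈ ℝ^d each satisfy x_i ≥ 0 elementwise, and let y₁, …, yₙ ∈ {−1, +1}. Then the empirical logistic loss, viewed as the set function L : 𝒫({1,…,d}) → ℝ defined by L(S) = ∑_{i=1}^n log(1 + exp(−y_i ⟨w, x_i⟩)), where w ∈ {α,β}^d has w_j = β exactly for j ∈ S and w_j = α otherwise, is supermodular. -/
private lemma key_logexp (a c δ : ℝ) (hac : a ≤ c) (hδ : 0 ≤ δ) :
    Real.log (1 + Real.exp (a + δ)) - Real.log (1 + Real.exp a) ≤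
      Real.log (1 + Real.exp (c + δ)) - Real.log (1 + Real.exp c) := by
  rw [sub_le_sub_iff, ← Real.log_mul (by positivity) (by positivity),
      ← Real.log_mul (by positivity) (by positivity)]
  apply Real.log_le_log (by positivity)
  have hea : Real.exp (a + δ) = Real.exp a * Real.exp δ := Real.exp_add a δ
  have hec : Real.exp (c + δ) = Real.exp c * Real.exp δ := Real.exp_add c δ
  have h5 : Real.exp a ≤ Real.exp c := Real.exp_le_exp.mpr hac
  have h6 : 1 ≤ Real.exp δ := Real.one_le_exp hδ
  rw [hea, hec]
  nlinarith [mul_nonneg (sub_nonneg.mpr h6) (sub_nonneg.mpr h5), Real.exp_pos a, Real.exp_pos c]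

theorem logistic_empirical_risk_supermodular
    (n d : ℕ) (hn : 0 < n) (hd : 0 < d) (α β : ℝ) (hαβ : α < β)
    (x : Fin n → Fin d → ℝ) (hx : ∀ i j, 0 ≤ x i j)
    (y : Fin n → ℝ) (hy : ∀ i, y i = -1 ∨ y i = 1) :
    IsSupermodular (fun S : Finset (Fin d) =>
      ∑ i, Real.log (1 + Real.exp (-(y i) * ∑ j, (if j ∈ S then β else α) * x i j))) := by
  intro B A hBA i₀ hi₀
  have hi₀B : i₀ ∉ B := fun h => hi₀ (hBA h)
  have hins : ∀ (S : Finset (Fin d)) (i : Fin n), i₀ ∉ S →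
      (∑ j, (if j ∈ insert i₀ S then β else α) * x i j)
        = (∑ j, (if j ∈ S then β else α) * x i j) + (β - α) * x i i₀ := by
    intro S i hS
    have hterm : ∀ j : Fin d, (if j ∈ insert i₀ S then β else α) * x i j
        = (if j ∈ S then β else α) * x i j + (if j = i₀ then (β - α) * x i j else 0) := by
      intro j
      by_cases hj : j = i₀
      · subst hj
        simp [hS]
        ring
      · simp [hj, Finset.mem_insert]
    rw [Finset.sum_congr rfl (fun j _ => hterm j), Finset.sum_add_distrib,
        Finset.sum_ite_eq' Finset.univ i₀]
    simp
  have hmono : ∀ i : Fin n, (∑ j, (if j ∈ B then β else α) * x i j)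
      ≤ ∑ j, (if j ∈ A then β else α) * x i j := by
    intro i
    apply Finset.sum_le_sum
    intro j _
    apply mul_le_mul_of_nonneg_right _ (hx i j)
    by_cases hjB : j ∈ B
    · simp [hjB, hBA hjB]
    · by_cases hjA : j ∈ A <;> simp [hjB, hjA, le_of_lt hαβ]
  simp only
  rw [← Finset.sum_sub_distrib, ← Finset.sum_sub_distrib]
  apply Finset.sum_le_sum
  intro i _
  rw [hins B i hi₀B, hins A i hi₀]
  set gB := ∑ j, (if j ∈ B then β else α) * x i j with hgB
  set gA := ∑ j, (if j ∈ A then β else α) * x i j with hgA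
  set δ := (β - α) * x i i₀ with hδdef
  have hδ : 0 ≤ δ := mul_nonneg (by linarith) (hx i i₀)
  have hle : gB ≤ gA := hmono i
  rcases hy i with h | h
  · rw [h]
    simp only [neg_neg, one_mul]
    exact key_logexp gB gA δ hle hδ
  · rw [h]
    have hkey := key_logexp (-gA - δ) (-gB - δ) δ (by linarith) hδ
    have e1 : -gA - δ + δ = -gA := by ring
    have e2 : -gB - δ + δ = -gB := by ring
    rw [e1, e2] at hkey
    have e3 : -(1:ℝ) * (gB + δ) = -gB - δ := by ring
    have e4 : -(1:ℝ) * (gA + δ) = -gA - δ := by ring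
    have e5 : -(1:ℝ) * gB = -gB := by ring
    have e6 : -(1:ℝ) * gA = -gA := by ring
    rw [e3, e4, e5, e6]
    linarith
end

section
/- Let g : ℝ → ℝ be convex, let d be a positive integer, and let x ∈ ℝ^d satisfy either x_i ≥ 0 for every i or x_i ≤ 0 for every i. Fix w₂ ∈ {0,1}^d. Then the set function F : 𝒫({1,…,d}) → ℝ defined by F(A) = (g(⟨w₁, 2x⟩) + g(⟨w₂, −2x⟩))/2, where w₁ ∈ {0,1}^d is the indicator vector of A, is supermodular; symmetrically, for fixed w₁ ∈ {0,1}^d, the set function A ↦ (g(⟨w₁, 2x⟩) + g(⟨w₂, −2x⟩))/2, where w₂ is the indicator vector of A, is supermodular. -/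
lemma wright_diff (g : ℝ → ℝ) (hg : ConvexOn ℝ Set.univ g) {a b t : ℝ}
    (hab : a ≤ b) (ht : 0 ≤ t) : g (a + t) - g a ≤ g (b + t) - g b := by
  rcases eq_or_lt_of_le ht with rfl | ht
  · simp
  have hs0 : 0 ≤ b - a := by linarith
  have hst : 0 < b - a + t := by linarith
  have hl : (0:ℝ) ≤ (b - a) / (b - a + t) := by positivity
  have hm : (0:ℝ) ≤ t / (b - a + t) := by positivity
  have hsum : (b - a) / (b - a + t) + t / (b - a + t) = 1 := by field_simp
  have h1 : g (((b - a) / (b - a + t)) • a + (t / (b - a + t)) • (b + t)) ≤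
      ((b - a) / (b - a + t)) • g a + (t / (b - a + t)) • g (b + t) :=
    hg.2 (Set.mem_univ a) (Set.mem_univ (b + t)) hl hm hsum
  have h2 : g ((t / (b - a + t)) • a + ((b - a) / (b - a + t)) • (b + t)) ≤
      (t / (b - a + t)) • g a + ((b - a) / (b - a + t)) • g (b + t) :=
    hg.2 (Set.mem_univ a) (Set.mem_univ (b + t)) hm hl (by linarith)
  have e1 : ((b - a) / (b - a + t)) • a + (t / (b - a + t)) • (b + t) = a + t := by
    rw [smul_eq_mul, smul_eq_mul]; field_simp; ring
  have e2 : (t / (b - a + t)) • a + ((b - a) / (b - a + t)) • (b + t) = b := by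
    rw [smul_eq_mul, smul_eq_mul]; field_simp; ring
  rw [e1] at h1; rw [e2] at h2
  simp only [smul_eq_mul] at h1 h2
  have key : g (a + t) + g b ≤ g a + g (b + t) := by
    calc g (a + t) + g b ≤ _ := add_le_add h1 h2
      _ = ((b - a) / (b - a + t) + t / (b - a + t)) * (g a + g (b + t)) := by ring
      _ = g a + g (b + t) := by rw [hsum, one_mul]
  linarith

lemma key_supermod (g : ℝ → ℝ) (hg : ConvexOn ℝ Set.univ g) {d : ℕ} (c : Fin d → ℝ)
    (hc : (∀ i, 0 ≤ c i) ∨ (∀ i, c i ≤ 0)) :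
    ∀ B A : Finset (Fin d), B ⊆ A → ∀ i ∉ A,
      g (∑ j ∈ insert i B, c j) - g (∑ j ∈ B, c j) ≤
      g (∑ j ∈ insert i A, c j) - g (∑ j ∈ A, c j) := by
  intro B A hBA i hiA
  have hiB : i ∉ B := fun h => hiA (hBA h)
  rw [Finset.sum_insert hiB, Finset.sum_insert hiA]
  set SB := ∑ j ∈ B, c j
  set SA := ∑ j ∈ A, c j
  rcases hc with h | h
  · have hle : SB ≤ SA :=
      Finset.sum_le_sum_of_subset_of_nonneg hBA (fun j _ _ => h j)
    have := wright_diff g hg hle (h i)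
    simpa [add_comm] using this
  · have hle : SA ≤ SB := by
      have : ∑ j ∈ B, -c j ≤ ∑ j ∈ A, -c j := by
        exact Finset.sum_le_sum_of_subset_of_nonneg hBA (fun j _ _ => by linarith [h j])
      simp only [Finset.sum_neg_distrib] at this
      linarith
    have := wright_diff g hg (t := -c i) (by linarith : SA + c i ≤ SB + c i) (by linarith [h i])
    simp only [add_neg_cancel_right] at this
    have goal : g (SA + c i) - g SA ≥ g (SB + c i) - g SB := by linarith
    simpa [add_comm] using goal

theorem ternary_split_supermodular_in_each_argument
    (g : ℝ → ℝ) (hg : ConvexOn ℝ Set.univ g)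
    (d : ℕ) (hd : 0 < d) (x : Fin d → ℝ)
    (hx : (∀ i, 0 ≤ x i) ∨ (∀ i, x i ≤ 0)) :
    (∀ w₂ : Fin d → ℝ, (∀ i, w₂ i = 0 ∨ w₂ i = 1) →
      IsSupermodular (fun A : Finset (Fin d) =>
        (g (∑ i ∈ A, 2 * x i) + g (∑ i, w₂ i * (-2 * x i))) / 2)) ∧
    (∀ w₁ : Fin d → ℝ, (∀ i, w₁ i = 0 ∨ w₁ i = 1) →
      IsSupermodular (fun A : Finset (Fin d) =>
        (g (∑ i, w₁ i * (2 * x i)) + g (∑ i ∈ A, -2 * x i)) / 2)) := by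
  constructor
  · intro w₂ _ B A hBA i hiA
    have := key_supermod g hg (fun i => 2 * x i)
      (hx.imp (fun h i => by show (0:ℝ) ≤ 2 * x i; linarith [h i]) (fun h i => by show (2:ℝ) * x i ≤ 0; linarith [h i])) B A hBA i hiA
    simp only
    linarith
  · intro w₁ _ B A hBA i hiA
    have := key_supermod g hg (fun i => -2 * x i)
      (hx.symm.imp (fun h i => by show (0:ℝ) ≤ -2 * x i; linarith [h i]) (fun h i => by show (-2:ℝ) * x i ≤ 0; linarith [h i])) B A hBA i hiA
    simp only
    linarith
end

section
/- Let g : ℝ → ℝ be strictly convex, let d ≥ 2, and let x ∈ ℝ^d have two distinct indices i ≠ j with x_i > 0 and x_j < 0. Then the set function F : 𝒫({1,…,d}) → ℝ defined by F(A) = g(∑_{k∈A} x_k) is not supermodular; specifically, g(x_i + x_j) − g(x_j) < g(x_i) − g(0), violating the supermodular inequality for element i with B = ∅ and A = {j}. Consequently, if x additionally has two positive entries, F is neither submodular nor supermodular. -/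
lemma pair_lt (g : ℝ → ℝ) (hg : StrictConvexOn ℝ Set.univ g)
    (t₁ t₂ μ : ℝ) (h : t₁ ≠ t₂) (h0 : 0 < μ) (h1 : μ < 1) :
    g (μ*t₁+(1-μ)*t₂) + g ((1-μ)*t₁+μ*t₂) < g t₁ + g t₂ := by
  have h2 := hg.2 (Set.mem_univ t₁) (Set.mem_univ t₂) h h0 (by linarith : (0:ℝ) < 1 - μ)
    (by ring)
  have h3 := hg.2 (Set.mem_univ t₁) (Set.mem_univ t₂) h (by linarith : (0:ℝ) < 1 - μ) h0
    (by ring)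
  simp only [smul_eq_mul] at h2 h3
  linarith

lemma key_mixed (g : ℝ → ℝ) (hg : StrictConvexOn ℝ Set.univ g)
    (a b : ℝ) (ha : 0 < a) (hb : b < 0) :
    g (a + b) + g 0 < g a + g b := by
  have hab : a - b > 0 := by linarith
  set μ : ℝ := -b / (a - b) with hμ
  have h0 : 0 < μ := div_pos (by linarith) hab
  have h1 : μ < 1 := (div_lt_one hab).2 (by linarith)
  have key := pair_lt g hg b a μ (by intro h; linarith) h0 h1
  have e1 : μ*b+(1-μ)*a = a + b := by rw [hμ]; field_simp; ring
  have e2 : (1-μ)*b+μ*a = 0 := by rw [hμ]; field_simp; ring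
  rw [e1, e2] at key
  linarith

lemma key_pos (g : ℝ → ℝ) (hg : StrictConvexOn ℝ Set.univ g)
    (a b : ℝ) (ha : 0 < a) (hb : 0 < b) :
    g a + g b < g (a + b) + g 0 := by
  have hs : 0 < a + b := by linarith
  set μ : ℝ := b / (a + b) with hμ
  have h0 : 0 < μ := div_pos hb hs
  have h1 : μ < 1 := (div_lt_one hs).2 (by linarith)
  have key := pair_lt g hg 0 (a+b) μ (by intro h; linarith) h0 h1
  have e1 : μ*0+(1-μ)*(a+b) = a := by rw [hμ]; field_simp; ring
  have e2 : (1-μ)*0+μ*(a+b) = b := by rw [hμ]; field_simp; ring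
  rw [e1, e2] at key
  linarith

lemma sum_lemmas {d : ℕ} (x : Fin d → ℝ) (i j : Fin d) (hij : i ≠ j) :
    (∑ k ∈ insert i ({j} : Finset (Fin d)), x k) = x i + x j := by
  rw [Finset.sum_insert (by simp [hij]), Finset.sum_singleton]

theorem strict_convex_mixed_entries_not_supermodular
    (g : ℝ → ℝ) (hg : StrictConvexOn ℝ Set.univ g)
    (d : ℕ) (hd : 2 ≤ d) (x : Fin d → ℝ)
    (i j : Fin d) (hij : i ≠ j) (hxi : 0 < x i) (hxj : x j < 0) :
    ¬ IsSupermodular (fun A : Finset (Fin d) => g (∑ k ∈ A, x k)) ∧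
      g (x i + x j) - g (x j) < g (x i) - g 0 ∧
      ((∃ k l : Fin d, k ≠ l ∧ 0 < x k ∧ 0 < x l) →
        ¬ IsSubmodular (fun A : Finset (Fin d) => g (∑ k ∈ A, x k)) ∧
        ¬ IsSupermodular (fun A : Finset (Fin d) => g (∑ k ∈ A, x k))) := by
  have hkey : g (x i + x j) - g (x j) < g (x i) - g 0 := by
    have := key_mixed g hg (x i) (x j) hxi hxj
    linarith
  have hnsup : ¬ IsSupermodular (fun A : Finset (Fin d) => g (∑ k ∈ A, x k)) := by
    intro h
    have := h ∅ {j} (Finset.empty_subset _) i (by simp [hij])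
    have e0 : ∑ k ∈ insert i (∅ : Finset (Fin d)), x k = x i := by simp
    simp only [Finset.sum_empty, Finset.sum_singleton, e0,
      sum_lemmas x i j hij] at this
    linarith
  refine ⟨hnsup, hkey, ?_⟩
  rintro ⟨k, l, hkl, hxk, hxl⟩
  refine ⟨?_, hnsup⟩
  intro h
  have := h ∅ {l} (Finset.empty_subset _) k (by simp [hkl])
  have e0 : ∑ m ∈ insert k (∅ : Finset (Fin d)), x m = x k := by simp
  simp only [Finset.sum_empty, Finset.sum_singleton, e0,
    sum_lemmas x k l hkl] at this
  have := key_pos g hg (x k) (x l) hxk hxl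
  linarith
end

section
/- Let d be a positive integer, α < β real numbers, x ∈ ℝ^d with x_i ≥ 0 for every i, y ∈ {−1, +1}, a ∈ ℝ with y·a ≤ 0, and C ∈ ℝ. Then the per-sample two-layer network loss, viewed as the set function L : 𝒫({1,…,d}) → ℝ defined by L(S) = log(1 + exp(−y·a·max(0, ⟨w, x⟩) − C)), where w ∈ {α,β}^d has w_i = β exactly for i ∈ S and w_i = α otherwise, is supermodular. -/
lemma maxdiff_mono (s t m : ℝ) (hst : s ≤ t) (hm : 0 ≤ m) :
    0 ≤ max 0 (s + m) - max 0 s ∧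
    max 0 (s + m) - max 0 s ≤ max 0 (t + m) - max 0 t := by
  simp only [max_def]
  constructor <;> (split_ifs <;> linarith)

lemma softplus_key (c C : ℝ) (hc : 0 ≤ c) (s t m : ℝ) (hst : s ≤ t) (hm : 0 ≤ m) :
    Real.log (1 + Real.exp (c * max 0 (s + m) - C)) -
      Real.log (1 + Real.exp (c * max 0 s - C)) ≤
    Real.log (1 + Real.exp (c * max 0 (t + m) - C)) -
      Real.log (1 + Real.exp (c * max 0 t - C)) := by
  obtain ⟨hds, hdiff⟩ := maxdiff_mono s t m hst hm
  have hdt : 0 ≤ max 0 (t + m) - max 0 t := by linarith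
  set A1 := c * max 0 s - C with hA1
  set A2 := c * max 0 (s + m) - C with hA2
  set B1 := c * max 0 t - C with hB1
  set B2 := c * max 0 (t + m) - C with hB2
  have hA1B1 : A1 ≤ B1 := by
    have : max 0 s ≤ max 0 t := max_le_max le_rfl hst
    have := mul_le_mul_of_nonneg_left this hc
    simp only [hA1, hB1]; linarith
  have hA2eq : A2 = A1 + c * (max 0 (s + m) - max 0 s) := by simp only [hA1, hA2]; ring
  have hB2eq : B2 = B1 + c * (max 0 (t + m) - max 0 t) := by simp only [hB1, hB2]; ring
  have hds' : 0 ≤ c * (max 0 (s + m) - max 0 s) := mul_nonneg hc hds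
  have hdd : c * (max 0 (s + m) - max 0 s) ≤ c * (max 0 (t + m) - max 0 t) :=
    mul_le_mul_of_nonneg_left hdiff hc
  -- product inequality
  have hprod : (1 + Real.exp A2) * (1 + Real.exp B1) ≤ (1 + Real.exp A1) * (1 + Real.exp B2) := by
    have h1 : Real.exp A2 = Real.exp A1 * Real.exp (c * (max 0 (s + m) - max 0 s)) := by
      rw [hA2eq, Real.exp_add]
    have h2 : Real.exp B2 = Real.exp B1 * Real.exp (c * (max 0 (t + m) - max 0 t)) := by
      rw [hB2eq, Real.exp_add]
    have hu1 : 1 ≤ Real.exp (c * (max 0 (s + m) - max 0 s)) := Real.one_le_exp hds'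
    have huv : Real.exp (c * (max 0 (s + m) - max 0 s)) ≤
        Real.exp (c * (max 0 (t + m) - max 0 t)) := Real.exp_le_exp.2 hdd
    have hPQ : Real.exp A1 ≤ Real.exp B1 := Real.exp_le_exp.2 hA1B1
    have hP : 0 < Real.exp A1 := Real.exp_pos _
    have hQ : 0 < Real.exp B1 := Real.exp_pos _
    -- exp A2 - exp A1 ≤ exp B2 - exp B1
    have hmid : Real.exp A2 - Real.exp A1 ≤ Real.exp B2 - Real.exp B1 := by
      rw [h1, h2]
      nlinarith [mul_nonneg (sub_nonneg.2 hPQ) (sub_nonneg.2 hu1),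
        mul_nonneg hQ.le (sub_nonneg.2 huv)]
    -- exp (A2 + B1) ≤ exp (A1 + B2)
    have hcross : Real.exp A2 * Real.exp B1 ≤ Real.exp A1 * Real.exp B2 := by
      rw [← Real.exp_add, ← Real.exp_add]
      apply Real.exp_le_exp.2
      rw [hA2eq, hB2eq]; linarith
    nlinarith
  have pos : ∀ u : ℝ, (0:ℝ) < 1 + Real.exp u := fun u => by positivity
  rw [sub_le_sub_iff, ← Real.log_mul (pos A2).ne' (pos B1).ne',
    ← Real.log_mul (pos B2).ne' (pos A1).ne']
  apply Real.log_le_log (by positivity)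
  nlinarith [hprod]

theorem two_layer_loss_supermodular_nonpositive_coefficient
    (d : ℕ) (hd : 0 < d) (α β : ℝ) (hαβ : α < β)
    (x : Fin d → ℝ) (hx : ∀ i, 0 ≤ x i)
    (y : ℝ) (hy : y = -1 ∨ y = 1) (a : ℝ) (hya : y * a ≤ 0) (C : ℝ) :
    IsSupermodular (fun S : Finset (Fin d) =>
      Real.log (1 + Real.exp
        (-(y * a * max 0 (∑ i, (if i ∈ S then β else α) * x i)) - C))) := by
  intro B A hBA i hiA
  have hiB : i ∉ B := fun h => hiA (hBA h)
  set c := -(y * a) with hc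
  have hc0 : 0 ≤ c := by simp only [hc]; linarith
  set m := (β - α) * x i with hmdef
  have hm : 0 ≤ m := mul_nonneg (by linarith) (hx i)
  set f : Finset (Fin d) → ℝ := fun S => ∑ j, (if j ∈ S then β else α) * x j with hf
  have hins : ∀ S : Finset (Fin d), i ∉ S → f (insert i S) = f S + m := by
    intro S hiS
    simp only [hf]
    have : ∀ j : Fin d, (if j ∈ insert i S then β else α) * x j
        = (if j ∈ S then β else α) * x j + (if j = i then m else 0) := by
      intro j
      by_cases hji : j = i
      · subst hji
        simp [hiS, hmdef]; ring
      · simp [hji, Finset.mem_insert]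
    rw [Finset.sum_congr rfl fun j _ => this j, Finset.sum_add_distrib,
      Finset.sum_ite_eq' Finset.univ i (fun _ => m)]
    simp
  have hmono : f B ≤ f A := by
    apply Finset.sum_le_sum
    intro j _
    by_cases hjB : j ∈ B
    · simp [hjB, hBA hjB]
    · by_cases hjA : j ∈ A
      · simp only [hjB, hjA, if_true, if_false]
        exact mul_le_mul_of_nonneg_right hαβ.le (hx j)
      · simp [hjB, hjA]
  have hrw : ∀ M : ℝ, -(y * a * M) - C = c * M - C := fun M => by simp only [hc]; ring
  simp only
  rw [hrw, hrw, hrw, hrw,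
    show (∑ j, (if j ∈ insert i B then β else α) * x j) = f B + m from hins B hiB,
    show (∑ j, (if j ∈ insert i A then β else α) * x j) = f A + m from hins A hiA]
  exact softplus_key c C hc0 (f B) (f A) m hmono hm
end

section
/- Let d be a positive integer, α < β real numbers, x ∈ ℝ^d with x_i ≥ 0 for every i, y ∈ {−1, +1}, a ∈ ℝ with y·a > 0, and C ∈ ℝ. Define the surrogate set function L̃ : 𝒫({1,…,d}) → ℝ by L̃(S) = log(1 + exp(−y·a·⟨w, x⟩ − C)), where w ∈ {α,β}^d has w_i = β exactly for i ∈ S and w_i = α otherwise (the loss with the ReLU removed). Then L̃ is supermodular, and L̃(S) ≥ log(1 + exp(−y·a·max(0, ⟨w, x⟩) − C)) for every S, i.e., L̃ is a supermodular upper bound of the true per-sample two-layer loss. -/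
private lemma key_convex (c C : ℝ) (hc : 0 < c) (t₁ t₂ δ : ℝ) (ht : t₁ ≤ t₂) (hδ : 0 ≤ δ) :
    Real.log (1 + Real.exp (-(c * (t₁ + δ)) - C)) - Real.log (1 + Real.exp (-(c * t₁) - C))
    ≤ Real.log (1 + Real.exp (-(c * (t₂ + δ)) - C)) - Real.log (1 + Real.exp (-(c * t₂) - C)) := by
  set u₁ := Real.exp (-(c * t₁) - C) with hu₁
  set u₂ := Real.exp (-(c * t₂) - C) with hu₂
  set r := Real.exp (-(c * δ)) with hr
  have h1 : Real.exp (-(c * (t₁ + δ)) - C) = r * u₁ := by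
    rw [hu₁, hr, ← Real.exp_add]; ring_nf
  have h2 : Real.exp (-(c * (t₂ + δ)) - C) = r * u₂ := by
    rw [hu₂, hr, ← Real.exp_add]; ring_nf
  have hu1pos : 0 < u₁ := Real.exp_pos _
  have hu2pos : 0 < u₂ := Real.exp_pos _
  have hrpos : 0 < r := Real.exp_pos _
  have hr1 : r ≤ 1 := Real.exp_le_one_iff.mpr (by nlinarith)
  have hu : u₂ ≤ u₁ := Real.exp_le_exp.mpr (by nlinarith)
  rw [h1, h2]
  have key : (1 + r * u₁) * (1 + u₂) ≤ (1 + r * u₂) * (1 + u₁) := by nlinarith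
  have hlog := Real.log_le_log (by positivity) key
  rw [Real.log_mul (by positivity) (by positivity),
      Real.log_mul (by positivity) (by positivity)] at hlog
  linarith

theorem two_layer_loss_surrogate_supermodular_upper_bound
    (d : ℕ) (hd : 0 < d) (α β : ℝ) (hαβ : α < β)
    (x : Fin d → ℝ) (hx : ∀ i, 0 ≤ x i)
    (y : ℝ) (hy : y = -1 ∨ y = 1) (a : ℝ) (hya : 0 < y * a) (C : ℝ) :
    IsSupermodular (fun S : Finset (Fin d) =>
      Real.log (1 + Real.exp
        (-(y * a * ∑ i, (if i ∈ S then β else α) * x i) - C))) ∧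
    (∀ S : Finset (Fin d),
      Real.log (1 + Real.exp
        (-(y * a * ∑ i, (if i ∈ S then β else α) * x i) - C))
      ≥ Real.log (1 + Real.exp
        (-(y * a * max 0 (∑ i, (if i ∈ S then β else α) * x i)) - C))) := by
  constructor
  · intro B A hBA i hiA
    have hiB : i ∉ B := fun h => hiA (hBA h)
    have hins : ∀ (S : Finset (Fin d)), i ∉ S →
        (∑ j, (if j ∈ insert i S then β else α) * x j)
          = (∑ j, (if j ∈ S then β else α) * x j) + (β - α) * x i := by
      intro S hiS
      have : (∑ j, ((if j ∈ insert i S then β else α) * x j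
          - (if j ∈ S then β else α) * x j)) = (β - α) * x i := by
        rw [Finset.sum_eq_single_of_mem i (Finset.mem_univ i)]
        · simp [hiS]; ring
        · intro j _ hji
          have : (j ∈ insert i S) ↔ (j ∈ S) := by simp [Finset.mem_insert, hji]
          rw [if_congr this rfl rfl]; ring
      rw [Finset.sum_sub_distrib] at this
      linarith
    have hmono : (∑ j, (if j ∈ B then β else α) * x j)
        ≤ (∑ j, (if j ∈ A then β else α) * x j) := by
      apply Finset.sum_le_sum
      intro j _
      by_cases hjB : j ∈ B
      · simp [hjB, hBA hjB]
      · by_cases hjA : j ∈ A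
        · simp only [hjB, hjA, if_true, if_false]
          nlinarith [hx j]
        · simp [hjB, hjA]
    simp only
    rw [hins B hiB, hins A hiA]
    exact key_convex (y * a) C hya _ _ _ hmono (by nlinarith [hx i, hαβ])
  · intro S
    apply Real.log_le_log (by positivity)
    have : -(y * a * max 0 (∑ i, (if i ∈ S then β else α) * x i)) - C
        ≤ -(y * a * ∑ i, (if i ∈ S then β else α) * x i) - C := by
      have h := le_max_right 0 (∑ i, (if i ∈ S then β else α) * x i)
      nlinarith
    linarith [Real.exp_le_exp.mpr this]
end
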